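/- Let X be a complex Banach space with property (Δ). Let (U_k)_{k=1}^∞ and (V_k)_{k=1}^∞ be sequences in L(X) with sup_n max_{ε_k=±1} ‖Σ_{k=1}^n ε_k U_k‖ ≤ M and sup_n max_{ε_k=±1} ‖Σ_{k=1}^n ε_k V_k‖ ≤ M, such that every U_j commutes with every V_k. Then there is a constant C, depending only on the property (Δ) constant of X, such that the family { Σ_{k=1}^n U_k V_k : n ∈ ℕ } is R-bounded with constant C·M². -/

import Mathlib

open MeasureTheory Complex Set Filter

noncomputable section

/-- The sign `±1` attached to a Boolean. -/
def bsign (b : Bool) : ℝ := if b then 1 else -1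

section RadDefs

variable {Y : Type*} [NormedAddCommGroup Y] [NormedSpace ℂ Y]

/-- `E ‖∑ εₖ xₖ‖²`, the average over all `2^n` choices of signs. -/
def radAvg {n : ℕ} (x : Fin n → Y) : ℝ :=
  (∑ ε : Fin n → Bool, ‖∑ k, bsign (ε k) • x k‖ ^ 2) / (2 ^ n : ℝ)

/-- `max_{εₖ = ±1} ‖∑ εₖ xₖ‖`. -/
def signSup {n : ℕ} (x : Fin n → Y) : ℝ :=
  ⨆ ε : Fin n → Bool, ‖∑ k, bsign (ε k) • x k‖

/-- `E ‖∑_{j,k} ε_j η_k x_{jk}‖²`, average over two independent families of signs. -/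
def radAvg2 {n : ℕ} (x : Fin n → Fin n → Y) : ℝ :=
  (∑ ε : Fin n → Bool, ∑ η : Fin n → Bool,
    ‖∑ j, ∑ k, (bsign (ε j) * bsign (η k)) • x j k‖ ^ 2) / ((2 ^ n : ℝ) * (2 ^ n : ℝ))

end RadDefs

section Bounded

variable {X : Type*} [NormedAddCommGroup X] [NormedSpace ℂ X]

/-- Rademacher boundedness with constant `C`. -/
def RBoundedWith (C : ℝ) (𝒯 : Set (X →L[ℂ] X)) : Prop :=
  ∀ (n : ℕ) (T : Fin n → X →L[ℂ] X), (∀ k, T k ∈ 𝒯) → ∀ x : Fin n → X,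
    Real.sqrt (radAvg fun k => T k (x k)) ≤ C * Real.sqrt (radAvg x)

/-- Weak Rademacher boundedness with constant `C`. -/
def WRBoundedWith (C : ℝ) (𝒯 : Set (X →L[ℂ] X)) : Prop :=
  ∀ (n : ℕ) (T : Fin n → X →L[ℂ] X), (∀ k, T k ∈ 𝒯) →
    ∀ (x : Fin n → X) (xs : Fin n → X →L[ℂ] ℂ),
      ∑ k, ‖xs k (T k (x k))‖ ≤ C * Real.sqrt (radAvg x) * Real.sqrt (radAvg xs)

/-- Unconditional boundedness with constant `C`. -/
def UBoundedWith (C : ℝ) (𝒯 : Set (X →L[ℂ] X)) : Prop :=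
  ∀ (n : ℕ) (T : Fin n → X →L[ℂ] X), (∀ k, T k ∈ 𝒯) →
    ∀ (x : Fin n → X) (xs : Fin n → X →L[ℂ] ℂ),
      ∑ k, ‖xs k (T k (x k))‖ ≤ C * signSup x * signSup xs

end Bounded

/-- Pisier's property (α) with constant `C`. -/
def PropAlphaWith (C : ℝ) (X : Type*) [NormedAddCommGroup X] [NormedSpace ℂ X] : Prop :=
  ∀ (n : ℕ) (x : Fin n → Fin n → X) (α : Fin n → Fin n → ℂ), (∀ j k, ‖α j k‖ ≤ 1) →
    Real.sqrt (radAvg2 fun j k => α j k • x j k) ≤ C * Real.sqrt (radAvg2 x)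

/-- Property (A) with constant `C`. -/
def PropAWith (C : ℝ) (X : Type*) [NormedAddCommGroup X] [NormedSpace ℂ X] : Prop :=
  ∀ (n : ℕ) (x : Fin n → Fin n → X) (xs : Fin n → Fin n → X →L[ℂ] ℂ),
    ∑ j, ∑ k, ‖xs j k (x j k)‖ ≤ C * Real.sqrt (radAvg2 x) * Real.sqrt (radAvg2 xs)

/-- Property (Δ) with constant `C`. -/
def PropDeltaWith (C : ℝ) (X : Type*) [NormedAddCommGroup X] [NormedSpace ℂ X] : Prop :=
  ∀ (n : ℕ) (x : Fin n → Fin n → X),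
    Real.sqrt (radAvg2 fun j k => if (k : ℕ) ≤ (j : ℕ) then x j k else 0)
      ≤ C * Real.sqrt (radAvg2 x)




lemma bsign_mul_self (b : Bool) : bsign b * bsign b = 1 := by cases b <;> simp [bsign]

lemma bsign_not (b : Bool) : bsign (!b) = - bsign b := by cases b <;> simp [bsign]

lemma card_bool_fun (a : ℕ) : Fintype.card (Fin a → Bool) = 2 ^ a := by
  simp

/-- Orthogonality of Rademacher variables. -/
lemma sum_bsign_mul (a : ℕ) (j k : Fin a) :
    ∑ ε : Fin a → Bool, bsign (ε j) * bsign (ε k) = if j = k then (2 ^ a : ℝ) else 0 := by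
  rcases eq_or_ne j k with h | h
  · subst h
    simp [bsign_mul_self, Finset.card_univ]
  · rw [if_neg h]
    apply Finset.sum_ninvolution (g := fun ε => Function.update ε j (!(ε j)))
    · intro ε
      have hk : Function.update ε j (!(ε j)) k = ε k :=
        Function.update_of_ne (Ne.symm h) _ _
      have hj : Function.update ε j (!(ε j)) j = !(ε j) := Function.update_self _ _ _
      rw [hk, hj, bsign_not]
      ring
    · intro ε _ heq
      have := congrFun heq j
      simp at this
    · intro ε; exact Finset.mem_univ _
    · intro ε
      funext i
      rcases eq_or_ne i j with rfl | hij
      · simp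
      · simp [Function.update_of_ne hij]


/-- Cauchy–Schwarz / Jensen for finite averages. -/
lemma norm_sum_sq_le {X : Type*} [NormedAddCommGroup X] {ι : Type*} [Fintype ι] (y : ι → X) :
    ‖∑ i, y i‖ ^ 2 ≤ (Fintype.card ι : ℝ) * ∑ i, ‖y i‖ ^ 2 := by
  have h1 : ‖∑ i, y i‖ ≤ ∑ i, ‖y i‖ := norm_sum_le _ _
  have h2 : (∑ i, ‖y i‖) ^ 2 ≤ (Fintype.card ι : ℝ) * ∑ i, ‖y i‖ ^ 2 := by
    have := Finset.sum_mul_sq_le_sq_mul_sq Finset.univ (fun _ : ι => (1 : ℝ)) (fun i => ‖y i‖)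
    simpa [Finset.card_univ] using this
  calc ‖∑ i, y i‖ ^ 2 ≤ (∑ i, ‖y i‖) ^ 2 := by
        apply pow_le_pow_left₀ (norm_nonneg _) h1
    _ ≤ _ := h2

/-- Averaging a function of `ε ∘ p` over all signs on the big index set equals averaging
over the small index set, when `p` is injective. -/
lemma avg_comp_inj {a m : ℕ} {p : Fin a → Fin m} (hp : Function.Injective p)
    (g : (Fin a → Bool) → ℝ) :
    (∑ ε : Fin m → Bool, g (ε ∘ p)) / (2 ^ m : ℝ) = (∑ ε : Fin a → Bool, g ε) / (2 ^ a : ℝ) := by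
  classical
  let e : (Fin m → Bool) ≃ ((Fin a → Bool) × ({ b : Fin m // b ∉ Set.range p } → Bool)) :=
  { toFun := fun ε => (ε ∘ p, fun b => ε b.1)
    invFun := fun uv b =>
      if h : ∃ i, p i = b then uv.1 h.choose else uv.2 ⟨b, by simpa [Set.mem_range] using h⟩
    left_inv := by
      intro ε
      funext b
      by_cases h : ∃ i, p i = b
      · simp only [h, dif_pos]
        have := h.choose_spec
        simp [Function.comp, this]
      · simp [h]
    right_inv := by
      rintro ⟨u, v⟩
      refine Prod.ext ?_ ?_
      · funext i
        have h : ∃ i', p i' = p i := ⟨i, rfl⟩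
        simp only [Function.comp, h, dif_pos]
        have : h.choose = i := hp h.choose_spec
        rw [this]
      · funext b
        have h : ¬ ∃ i', p i' = b.1 := by
          rcases b with ⟨b, hb⟩
          simpa [Set.mem_range] using hb
        simp [h] }
  have key : ∑ ε : Fin m → Bool, g (ε ∘ p)
      = (Fintype.card ({ b : Fin m // b ∉ Set.range p } → Bool) : ℝ) *
        ∑ ε : Fin a → Bool, g ε := by
    have := Equiv.sum_comp e.symm (fun ε : Fin m → Bool => g (ε ∘ p))
    rw [← this]
    have heval : ∀ uv, g ((e.symm uv) ∘ p) = g uv.1 := by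
      intro uv
      have : (e.symm uv) ∘ p = uv.1 := congrArg Prod.fst (e.right_inv uv)
      rw [this]
    rw [Fintype.sum_prod_type]
    simp only [heval]
    rw [Finset.sum_comm]
    simp [Finset.sum_const, Finset.card_univ, mul_comm]
  have hcard : (2 : ℝ) ^ m
      = 2 ^ a * (Fintype.card ({ b : Fin m // b ∉ Set.range p } → Bool) : ℝ) := by
    have := Fintype.card_congr e
    simp only [Fintype.card_fun, Fintype.card_fin, Fintype.card_bool, Fintype.card_prod] at this
    rw [Fintype.card_fun, Fintype.card_bool]
    exact_mod_cast this
  rw [key, hcard]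
  have ht : (0:ℝ) < (Fintype.card ({ b : Fin m // b ∉ Set.range p } → Bool) : ℝ) := by
    exact_mod_cast Fintype.card_pos
  field_simp



noncomputable section D
variable {X : Type*} [NormedAddCommGroup X] [NormedSpace ℂ X]

/-- Generic double Rademacher average for a rectangular array. -/
def davg {a b : ℕ} (y : Fin a → Fin b → X) : ℝ :=
  (∑ δ : Fin a → Bool, ∑ ε : Fin b → Bool,
    ‖∑ i, ∑ j, (bsign (δ i) * bsign (ε j)) • y i j‖ ^ 2) / ((2 ^ a : ℝ) * (2 ^ b : ℝ))

/-- Embedding of a rectangular array into a bigger square array along injections. -/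
def embed {a b m : ℕ} (p : Fin a → Fin m) (q : Fin b → Fin m) (y : Fin a → Fin b → X) :
    Fin m → Fin m → X :=
  fun J K => ∑ i, ∑ j, if p i = J ∧ q j = K then y i j else 0

lemma sum_comm4 {M : Type*} [AddCommMonoid M] {α β γ κ : Type*}
    [Fintype α] [Fintype β] [Fintype γ] [Fintype κ] (f : α → β → γ → κ → M) :
    ∑ J, ∑ K, ∑ i, ∑ j, f J K i j = ∑ i, ∑ j, ∑ J, ∑ K, f J K i j := by
  calc ∑ J, ∑ K, ∑ i, ∑ j, f J K i j
      = ∑ J, ∑ i, ∑ K, ∑ j, f J K i j :=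
        Finset.sum_congr rfl fun J _ => Finset.sum_comm
    _ = ∑ i, ∑ J, ∑ K, ∑ j, f J K i j := Finset.sum_comm
    _ = ∑ i, ∑ j, ∑ J, ∑ K, f J K i j := by
        refine Finset.sum_congr rfl fun i _ => ?_
        calc ∑ J, ∑ K, ∑ j, f J K i j
            = ∑ J, ∑ j, ∑ K, f J K i j :=
              Finset.sum_congr rfl fun J _ => Finset.sum_comm
          _ = ∑ j, ∑ J, ∑ K, f J K i j := Finset.sum_comm

lemma embed_pair_sum {a b m : ℕ} (p : Fin a → Fin m) (q : Fin b → Fin m)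
    (y : Fin a → Fin b → X) (c d : Fin m → ℝ) :
    ∑ J, ∑ K, (c J * d K) • embed p q y J K
      = ∑ i, ∑ j, (c (p i) * d (q j)) • y i j := by
  unfold embed
  have step : ∀ J K, (c J * d K) • (∑ i, ∑ j, if p i = J ∧ q j = K then y i j else 0)
      = ∑ i, ∑ j, if (p i, q j) = (J, K) then (c J * d K) • y i j else 0 := by
    intro J K
    rw [Finset.smul_sum]
    refine Finset.sum_congr rfl fun i _ => ?_
    rw [Finset.smul_sum]
    refine Finset.sum_congr rfl fun j _ => ?_
    simp only [Prod.mk.injEq]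
    split <;> simp
  simp only [step]
  rw [sum_comm4 (fun J K i j => if (p i, q j) = (J, K) then (c J * d K) • y i j else 0)]
  refine Finset.sum_congr rfl fun i _ => ?_
  refine Finset.sum_congr rfl fun j _ => ?_
  set ij : Fin a × Fin b := (i, j) with hij
  have hi : i = ij.1 := rfl
  have hj : j = ij.2 := rfl
  rw [hi, hj]
  rw [← Fintype.sum_prod_type']
  have : ∀ JK : Fin m × Fin m,
      (if (p ij.1, q ij.2) = JK then (c JK.1 * d JK.2) • y ij.1 ij.2 else 0)
        = (if (p ij.1, q ij.2) = JK then (c (p ij.1) * d (q ij.2)) • y ij.1 ij.2 else 0) := by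
    intro JK
    by_cases h : (p ij.1, q ij.2) = JK
    · rw [if_pos h, if_pos h, ← h]
    · rw [if_neg h, if_neg h]
  simp only [this]
  rw [Finset.sum_ite_eq]
  simp
lemma davg_embed {a b m : ℕ} {p : Fin a → Fin m} {q : Fin b → Fin m}
    (hp : Function.Injective p) (hq : Function.Injective q) (y : Fin a → Fin b → X) :
    davg (embed p q y) = davg y := by
  unfold davg
  have inner : ∀ (δ ε : Fin m → Bool),
      ‖∑ J, ∑ K, (bsign (δ J) * bsign (ε K)) • embed p q y J K‖ ^ 2
        = ‖∑ i, ∑ j, (bsign ((δ ∘ p) i) * bsign ((ε ∘ q) j)) • y i j‖ ^ 2 := by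
    intro δ ε
    rw [embed_pair_sum p q y (fun J => bsign (δ J)) (fun K => bsign (ε K))]
    rfl
  simp only [inner]
  set G : (Fin a → Bool) → (Fin b → Bool) → ℝ :=
    fun u v => ‖∑ i, ∑ j, (bsign (u i) * bsign (v j)) • y i j‖ ^ 2 with hG
  calc (∑ δ : Fin m → Bool, ∑ ε : Fin m → Bool, G (δ ∘ p) (ε ∘ q)) / ((2 ^ m : ℝ) * 2 ^ m)
      = (∑ δ : Fin m → Bool, (∑ ε : Fin m → Bool, G (δ ∘ p) (ε ∘ q)) / (2 ^ m : ℝ)) / 2 ^ m := by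
        rw [← div_div, Finset.sum_div]
    _ = (∑ δ : Fin m → Bool, (∑ v : Fin b → Bool, G (δ ∘ p) v) / (2 ^ b : ℝ)) / 2 ^ m := by
        refine congrArg (· / ((2:ℝ) ^ m)) ?_
        exact Finset.sum_congr rfl fun δ _ => avg_comp_inj hq (G (δ ∘ p))
    _ = ((∑ δ : Fin m → Bool, (∑ v : Fin b → Bool, G (δ ∘ p) v)) / (2 ^ m : ℝ)) / 2 ^ b := by
        rw [← Finset.sum_div, div_div, div_div, mul_comm ((2:ℝ)^b)]
    _ = ((∑ u : Fin a → Bool, ∑ v : Fin b → Bool, G u v) / (2 ^ a : ℝ)) / 2 ^ b := by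
        rw [avg_comp_inj hp (fun u => ∑ v : Fin b → Bool, G u v)]
    _ = (∑ u : Fin a → Bool, ∑ v : Fin b → Bool, G u v) / ((2 ^ a : ℝ) * 2 ^ b) := by
        rw [div_div]

lemma davg_row_perm {a b : ℕ} (σ : Equiv.Perm (Fin a)) (y : Fin a → Fin b → X) :
    davg (fun i j => y (σ i) j) = davg y := by
  unfold davg
  congr 1
  have inner : ∀ (δ : Fin a → Bool) (ε : Fin b → Bool),
      ∑ i, ∑ j, (bsign (δ i) * bsign (ε j)) • y (σ i) j
        = ∑ i, ∑ j, (bsign ((δ ∘ ⇑σ.symm) i) * bsign (ε j)) • y i j := by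
    intro δ ε
    rw [← Equiv.sum_comp σ
      (fun i => ∑ j, (bsign ((δ ∘ ⇑σ.symm) i) * bsign (ε j)) • y i j)]
    refine Finset.sum_congr rfl fun i _ => Finset.sum_congr rfl fun j _ => ?_
    simp
  simp only [inner]
  exact Fintype.sum_equiv (Equiv.arrowCongr σ (Equiv.refl Bool))
    (fun δ => ∑ ε : Fin b → Bool,
      ‖∑ i, ∑ j, (bsign ((δ ∘ ⇑σ.symm) i) * bsign (ε j)) • y i j‖ ^ 2)
    (fun δ => ∑ ε : Fin b → Bool,
      ‖∑ i, ∑ j, (bsign (δ i) * bsign (ε j)) • y i j‖ ^ 2)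
    (fun δ => rfl)

lemma trunc_embed {a b m : ℕ} (p : Fin a → Fin m) (q : Fin b → Fin m) (r : Fin a → ℕ)
    (key : ∀ i j, ((q j : ℕ) ≤ (p i : ℕ)) ↔ ((j : ℕ) < r i)) (y : Fin a → Fin b → X) :
    (fun (J K : Fin m) => if (K : ℕ) ≤ (J : ℕ) then embed p q y J K else 0)
      = embed p q (fun i j => if (j : ℕ) < r i then y i j else 0) := by
  funext J K
  unfold embed
  rw [show (if (K:ℕ) ≤ (J:ℕ) then (∑ i, ∑ j, if p i = J ∧ q j = K then y i j else 0) else 0)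
      = ∑ i, ∑ j, if (K:ℕ) ≤ (J:ℕ) then (if p i = J ∧ q j = K then y i j else 0) else 0
      from by split <;> simp]
  refine Finset.sum_congr rfl fun i _ => Finset.sum_congr rfl fun j _ => ?_
  beta_reduce
  by_cases h : p i = J ∧ q j = K
  · obtain ⟨h1, h2⟩ := h
    subst h1; subst h2
    by_cases hk : ((q j : ℕ) ≤ (p i : ℕ))
    · rw [if_pos hk, if_pos ⟨rfl, rfl⟩, if_pos ⟨rfl, rfl⟩, if_pos ((key i j).mp hk)]
    · rw [if_neg hk, if_pos ⟨rfl, rfl⟩, if_neg (fun hc => hk ((key i j).mpr hc))]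
  · rw [show (if p i = J ∧ q j = K then (if (j:ℕ) < r i then y i j else 0) else 0) = 0
        from if_neg h]
    split
    all_goals simp [h]

lemma staircase (a b : ℕ) (r : Fin a → ℕ) (hmono : Monotone r) (hle : ∀ i, r i ≤ b) :
    ∃ (p : Fin a → Fin (a + b)) (q : Fin b → Fin (a + b)),
      Function.Injective p ∧ Function.Injective q ∧
      ∀ i j, ((q j : ℕ) ≤ (p i : ℕ)) ↔ ((j : ℕ) < r i) := by
  classical
  set c : Fin b → ℕ := fun j => (Finset.univ.filter fun i : Fin a => r i ≤ (j : ℕ)).card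
    with hc
  have hcle : ∀ j, c j ≤ a := fun j =>
    le_trans (Finset.card_filter_le _ _) (by simp)
  refine ⟨fun i => ⟨i + r i, by have := i.2; have := hle i; omega⟩,
          fun j => ⟨j + c j, by have := j.2; have := hcle j; omega⟩, ?_, ?_, ?_⟩
  · -- injectivity of p
    have mono' : ∀ {i i' : Fin a}, i < i' → ((i:ℕ) + r i < (i':ℕ) + r i') := by
      intro i i' h
      have h1 := hmono (le_of_lt h)
      have h2 : (i:ℕ) < (i':ℕ) := h
      omega
    intro i i' h
    have hv : (i:ℕ) + r i = (i':ℕ) + r i' := congrArg Fin.val h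
    rcases lt_trichotomy i i' with hlt | he | hgt
    · exact absurd hv (ne_of_lt (mono' hlt))
    · exact he
    · exact absurd hv.symm (ne_of_lt (mono' hgt))
  · -- injectivity of q
    have cmono : ∀ {j j' : Fin b}, j ≤ j' → c j ≤ c j' := by
      intro j j' h
      refine Finset.card_le_card ?_
      intro i hi
      simp only [Finset.mem_filter, Finset.mem_univ, true_and] at hi ⊢
      have hjj : (j:ℕ) ≤ (j':ℕ) := h
      omega
    have mono' : ∀ {j j' : Fin b}, j < j' → ((j:ℕ) + c j < (j':ℕ) + c j') := by
      intro j j' h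
      have h1 := cmono (le_of_lt h)
      have h2 : (j:ℕ) < (j':ℕ) := h
      omega
    intro j j' h
    have hv : (j:ℕ) + c j = (j':ℕ) + c j' := congrArg Fin.val h
    rcases lt_trichotomy j j' with hlt | he | hgt
    · exact absurd hv (ne_of_lt (mono' hlt))
    · exact he
    · exact absurd hv.symm (ne_of_lt (mono' hgt))
  · intro i j
    constructor
    · intro hq
      by_contra hj
      push_neg at hj
      have hsub : Finset.Iic i ⊆ Finset.univ.filter (fun i' => r i' ≤ (j:ℕ)) := by
        intro i' hi'
        rw [Finset.mem_Iic] at hi'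
        simp only [Finset.mem_filter, Finset.mem_univ, true_and]
        exact le_trans (hmono hi') hj
      have h1 : (i:ℕ) + 1 ≤ c j := by
        have := Finset.card_le_card hsub
        rwa [Fin.card_Iic] at this
      have h2 : (j:ℕ) + c j ≤ (i:ℕ) + r i := hq
      omega
    · intro hj
      have hsub : Finset.univ.filter (fun i' => r i' ≤ (j:ℕ)) ⊆ Finset.Iio i := by
        intro i' hi'
        simp only [Finset.mem_filter, Finset.mem_univ, true_and] at hi'
        rw [Finset.mem_Iio]
        by_contra hge
        push_neg at hge
        have := hmono hge
        omega
      have h1 : c j ≤ (i:ℕ) := by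
        have := Finset.card_le_card hsub
        rwa [Fin.card_Iio] at this
      show (j:ℕ) + c j ≤ (i:ℕ) + r i
      omega

lemma radAvg2_eq_davg {a : ℕ} (x : Fin a → Fin a → X) : radAvg2 x = davg x := rfl

lemma davg_nonneg {a b : ℕ} (y : Fin a → Fin b → X) : 0 ≤ davg y := by
  unfold davg
  positivity

lemma radAvg2_nonneg {a : ℕ} (x : Fin a → Fin a → X) : 0 ≤ radAvg2 x := by
  rw [radAvg2_eq_davg]; exact davg_nonneg x

lemma radAvg_nonneg {a : ℕ} (x : Fin a → X) : 0 ≤ radAvg x := by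
  unfold radAvg
  positivity

lemma radAvg_sum_perm {a : ℕ} (σ : Equiv.Perm (Fin a)) (v : Fin a → X) :
    ∑ δ : Fin a → Bool, ‖∑ i, bsign (δ i) • v (σ i)‖ ^ 2
      = ∑ δ : Fin a → Bool, ‖∑ i, bsign (δ i) • v i‖ ^ 2 := by
  have inner : ∀ δ : Fin a → Bool,
      ∑ i, bsign (δ i) • v (σ i) = ∑ i, bsign ((δ ∘ ⇑σ.symm) i) • v i := by
    intro δ
    rw [← Equiv.sum_comp σ (fun i => bsign ((δ ∘ ⇑σ.symm) i) • v i)]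
    refine Finset.sum_congr rfl fun i _ => ?_
    simp
  simp only [inner]
  exact Fintype.sum_equiv (Equiv.arrowCongr σ (Equiv.refl Bool)) _ _ (fun δ => rfl)

def extBool {a : ℕ} (ε : Fin a → Bool) : ℕ → Bool :=
  fun m => if h : m < a then ε ⟨m, h⟩ else true

lemma opnorm_bound (W : ℕ → X →L[ℂ] X) (M : ℝ)
    (h : ∀ (c : ℕ) (ε : ℕ → Bool), ‖∑ k ∈ Finset.range c, bsign (ε k) • W k‖ ≤ M)
    (b : ℕ) (ε : Fin b → Bool) : ‖∑ j : Fin b, bsign (ε j) • W (j : ℕ)‖ ≤ M := by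
  have key := h b (extBool ε)
  rw [← Fin.sum_univ_eq_sum_range (fun k => bsign (extBool ε k) • W k) b] at key
  have e : ∀ j : Fin b, bsign (extBool ε (j : ℕ)) • W (j : ℕ) = bsign (ε j) • W (j : ℕ) := by
    intro j
    congr 1
    simp [extBool, j.isLt]
  rw [Finset.sum_congr rfl (fun j _ => e j)] at key
  exact key

lemma sum_comm13 {M : Type*} [AddCommMonoid M] {α β γ κ : Type*}
    [Fintype α] [Fintype β] [Fintype γ] [Fintype κ] (f : α → β → γ → κ → M) :
    ∑ e : α, ∑ m : β, ∑ k : γ, ∑ j : κ, f e m k j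
      = ∑ m, ∑ k, ∑ j, ∑ e, f e m k j := by
  calc ∑ e : α, ∑ m, ∑ k, ∑ j, f e m k j
      = ∑ m, ∑ e, ∑ k, ∑ j, f e m k j := Finset.sum_comm
    _ = ∑ m, ∑ k, ∑ e, ∑ j, f e m k j :=
        Finset.sum_congr rfl fun m _ => Finset.sum_comm
    _ = ∑ m, ∑ k, ∑ j, ∑ e, f e m k j :=
        Finset.sum_congr rfl fun m _ => Finset.sum_congr rfl fun k _ => Finset.sum_comm

lemma sq_le_of_sqrt_le {u v C : ℝ} (hu : 0 ≤ u) (hv : 0 ≤ v)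
    (h : Real.sqrt u ≤ C * Real.sqrt v) : u ≤ C ^ 2 * v := by
  have h2 : Real.sqrt u ^ 2 ≤ (C * Real.sqrt v) ^ 2 :=
    pow_le_pow_left₀ (Real.sqrt_nonneg _) h 2
  rwa [Real.sq_sqrt hu, mul_pow, Real.sq_sqrt hv] at h2

end D

/-- In a space with property (Δ) (with constant `CΔ`), if the sign-sums of
`(U_k)` and `(V_k)` are uniformly bounded by `M` and every `U_j` commutes with every `V_k`,
then `{∑_{k<n} U_k V_k : n ∈ ℕ}` is R-bounded with constant `C·M²`, where `C` depends only
on the property (Δ) constant. -/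
theorem stmt_6 : ∀ CΔ : ℝ, ∃ C : ℝ,
    ∀ (X : Type) [NormedAddCommGroup X] [NormedSpace ℂ X] [CompleteSpace X],
    PropDeltaWith CΔ X →
    ∀ (U V : ℕ → X →L[ℂ] X) (M : ℝ),
      (∀ (n : ℕ) (ε : ℕ → Bool), ‖∑ k ∈ Finset.range n, bsign (ε k) • U k‖ ≤ M) →
      (∀ (n : ℕ) (ε : ℕ → Bool), ‖∑ k ∈ Finset.range n, bsign (ε k) • V k‖ ≤ M) →
      (∀ j k : ℕ, U j ∘L V k = V k ∘L U j) →
      RBoundedWith (C * M ^ 2)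
        {W | ∃ n : ℕ, W = ∑ k ∈ Finset.range n, (U k ∘L V k)} := by
  intro CΔ
  refine ⟨|CΔ|, ?_⟩
  intro X _ _ _ hΔ U V M hU hV hcomm
  intro n T hT x
  classical
  have hM0 : 0 ≤ M := by
    have := hU 0 (fun _ => true)
    simpa using this
  choose N hN using hT
  set Nm : ℕ := Finset.univ.sup N with hNmdef
  have hNle : ∀ k, N k ≤ Nm := fun k => Finset.le_sup (Finset.mem_univ k)
  set σ : Equiv.Perm (Fin n) := Tuple.sort N with hσdef
  have hmono : Monotone (N ∘ σ) := Tuple.monotone_sort N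
  obtain ⟨p, q, hp, hq, hkey⟩ := staircase n Nm (N ∘ ⇑σ) hmono (fun i => hNle _)
  set Y : Fin n → Fin Nm → X := fun k j => if (j : ℕ) < N k then U j (x k) else 0 with hYdef
  set Z : Fin n → Fin Nm → X := fun i j => U j (x (σ i)) with hZdef
  have hUop : ∀ ε : Fin Nm → Bool, ‖∑ j : Fin Nm, bsign (ε j) • U (j : ℕ)‖ ≤ M :=
    opnorm_bound U M hU Nm
  have hVop : ∀ ε : Fin Nm → Bool, ‖∑ j : Fin Nm, bsign (ε j) • V (j : ℕ)‖ ≤ M :=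
    opnorm_bound V M hV Nm
  -- the doubly-randomized vectors
  set w : (Fin n → Bool) → (Fin Nm → Bool) → X :=
    fun δ ε => ∑ k, ∑ j : Fin Nm, (bsign (δ k) * bsign (ε j)) • Y k j with hwdef
  -- Step 1 : de-randomization identity and bound
  have claimA : ∀ δ : Fin n → Bool,
      ∑ ε : Fin Nm → Bool, (∑ m : Fin Nm, bsign (ε m) • V (m : ℕ)) (w δ ε)
        = (2 ^ Nm : ℝ) • ∑ k, bsign (δ k) • T k (x k) := by
    intro δ
    have expand : ∀ ε : Fin Nm → Bool,
        (∑ m : Fin Nm, bsign (ε m) • V (m : ℕ)) (w δ ε)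
          = ∑ m : Fin Nm, ∑ k, ∑ j : Fin Nm,
              (bsign (δ k) * (bsign (ε m) * bsign (ε j))) • V (m : ℕ) (Y k j) := by
      intro ε
      rw [hwdef]
      rw [ContinuousLinearMap.sum_apply]
      refine Finset.sum_congr rfl fun m _ => ?_
      rw [ContinuousLinearMap.smul_apply, map_sum, Finset.smul_sum]
      refine Finset.sum_congr rfl fun k _ => ?_
      rw [map_sum, Finset.smul_sum]
      refine Finset.sum_congr rfl fun j _ => ?_
      rw [ContinuousLinearMap.map_smul_of_tower, smul_smul]
      congr 1
      ring
    calc ∑ ε : Fin Nm → Bool, (∑ m : Fin Nm, bsign (ε m) • V (m : ℕ)) (w δ ε)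
        = ∑ ε : Fin Nm → Bool, ∑ m : Fin Nm, ∑ k, ∑ j : Fin Nm,
            (bsign (δ k) * (bsign (ε m) * bsign (ε j))) • V (m : ℕ) (Y k j) :=
          Finset.sum_congr rfl fun ε _ => expand ε
      _ = ∑ m : Fin Nm, ∑ k, ∑ j : Fin Nm, ∑ ε : Fin Nm → Bool,
            (bsign (δ k) * (bsign (ε m) * bsign (ε j))) • V (m : ℕ) (Y k j) :=
          sum_comm13 _
      _ = ∑ m : Fin Nm, ∑ k, ∑ j : Fin Nm,
            (if m = j then (bsign (δ k) * 2 ^ Nm) • V (m : ℕ) (Y k j) else 0) := by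
          refine Finset.sum_congr rfl fun m _ => Finset.sum_congr rfl fun k _ =>
            Finset.sum_congr rfl fun j _ => ?_
          rw [← Finset.sum_smul]
          rw [show (∑ ε : Fin Nm → Bool, bsign (δ k) * (bsign (ε m) * bsign (ε j)))
              = bsign (δ k) * ∑ ε : Fin Nm → Bool, bsign (ε m) * bsign (ε j)
            from (Finset.mul_sum _ _ _).symm]
          rw [sum_bsign_mul Nm m j]
          split
          · rfl
          · simp
      _ = ∑ m : Fin Nm, ∑ k, (bsign (δ k) * 2 ^ Nm) • V (m : ℕ) (Y k m) := by
          refine Finset.sum_congr rfl fun m _ => Finset.sum_congr rfl fun k _ => ?_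
          rw [Finset.sum_ite_eq]
          simp
      _ = ∑ k, (bsign (δ k) * 2 ^ Nm) • ∑ m : Fin Nm, V (m : ℕ) (Y k m) := by
          rw [Finset.sum_comm]
          exact Finset.sum_congr rfl fun k _ => (Finset.smul_sum).symm
      _ = ∑ k, (bsign (δ k) * 2 ^ Nm) • T k (x k) := by
          refine Finset.sum_congr rfl fun k _ => ?_
          congr 1
          have e1 : ∀ m : Fin Nm, V (m : ℕ) (Y k m)
              = (if (m : ℕ) < N k then ((U (m : ℕ)) ∘L (V (m : ℕ))) (x k) else 0) := by
            intro m
            by_cases hm : (m : ℕ) < N k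
            · rw [hYdef]
              simp only [if_pos hm]
              rw [hcomm]
              rfl
            · rw [hYdef]
              simp only [if_neg hm]
              simp
          rw [Finset.sum_congr rfl fun m _ => e1 m]
          rw [Fin.sum_univ_eq_sum_range
            (fun t => if t < N k then ((U t) ∘L (V t)) (x k) else 0) Nm]
          rw [← Finset.sum_filter]
          rw [show (Finset.range Nm).filter (fun t => t < N k) = Finset.range (N k) from by
            ext t
            simp only [Finset.mem_filter, Finset.mem_range]
            have := hNle k
            omega]
          rw [hN k, ContinuousLinearMap.sum_apply]
      _ = (2 ^ Nm : ℝ) • ∑ k, bsign (δ k) • T k (x k) := by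
          rw [Finset.smul_sum]
          refine Finset.sum_congr rfl fun k _ => ?_
          rw [smul_smul]
          congr 1
          ring
  have bound1 : ∀ δ : Fin n → Bool,
      (2 ^ Nm : ℝ) * ‖∑ k, bsign (δ k) • T k (x k)‖ ^ 2
        ≤ M ^ 2 * ∑ ε : Fin Nm → Bool, ‖w δ ε‖ ^ 2 := by
    intro δ
    have hpos : (0 : ℝ) < 2 ^ Nm := by positivity
    rw [← mul_le_mul_iff_of_pos_left hpos]
    have hA : ((2 : ℝ) ^ Nm) ^ 2 * ‖∑ k, bsign (δ k) • T k (x k)‖ ^ 2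
        = ‖∑ ε : Fin Nm → Bool, (∑ m : Fin Nm, bsign (ε m) • V (m : ℕ)) (w δ ε)‖ ^ 2 := by
      rw [claimA δ, norm_smul]
      rw [Real.norm_of_nonneg (le_of_lt hpos)]
      ring
    have hJ : ‖∑ ε : Fin Nm → Bool, (∑ m : Fin Nm, bsign (ε m) • V (m : ℕ)) (w δ ε)‖ ^ 2
        ≤ (2 ^ Nm : ℝ) * ∑ ε : Fin Nm → Bool,
            ‖(∑ m : Fin Nm, bsign (ε m) • V (m : ℕ)) (w δ ε)‖ ^ 2 := by
      have := norm_sum_sq_le (fun ε : Fin Nm → Bool =>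
        (∑ m : Fin Nm, bsign (ε m) • V (m : ℕ)) (w δ ε))
      rwa [card_bool_fun, Nat.cast_pow, Nat.cast_ofNat] at this
    have hB : ∀ ε : Fin Nm → Bool,
        ‖(∑ m : Fin Nm, bsign (ε m) • V (m : ℕ)) (w δ ε)‖ ^ 2 ≤ M ^ 2 * ‖w δ ε‖ ^ 2 := by
      intro ε
      have h1 : ‖(∑ m : Fin Nm, bsign (ε m) • V (m : ℕ)) (w δ ε)‖ ≤ M * ‖w δ ε‖ :=
        le_trans (ContinuousLinearMap.le_opNorm _ _)
          (mul_le_mul_of_nonneg_right (hVop ε) (norm_nonneg _))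
      calc ‖(∑ m : Fin Nm, bsign (ε m) • V (m : ℕ)) (w δ ε)‖ ^ 2
          ≤ (M * ‖w δ ε‖) ^ 2 := pow_le_pow_left₀ (norm_nonneg _) h1 2
        _ = M ^ 2 * ‖w δ ε‖ ^ 2 := by ring
    calc (2 ^ Nm : ℝ) * ((2 ^ Nm : ℝ) * ‖∑ k, bsign (δ k) • T k (x k)‖ ^ 2)
        = ((2 : ℝ) ^ Nm) ^ 2 * ‖∑ k, bsign (δ k) • T k (x k)‖ ^ 2 := by ring
      _ = ‖∑ ε : Fin Nm → Bool, (∑ m : Fin Nm, bsign (ε m) • V (m : ℕ)) (w δ ε)‖ ^ 2 := hA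
      _ ≤ (2 ^ Nm : ℝ) * ∑ ε : Fin Nm → Bool,
            ‖(∑ m : Fin Nm, bsign (ε m) • V (m : ℕ)) (w δ ε)‖ ^ 2 := hJ
      _ ≤ (2 ^ Nm : ℝ) * (M ^ 2 * ∑ ε : Fin Nm → Bool, ‖w δ ε‖ ^ 2) := by
          refine mul_le_mul_of_nonneg_left ?_ (le_of_lt hpos)
          rw [Finset.mul_sum]
          exact Finset.sum_le_sum fun ε _ => hB ε
  have h1 : radAvg (fun k => T k (x k)) ≤ M ^ 2 * davg Y := by
    have total : (2 ^ Nm : ℝ) * ∑ δ : Fin n → Bool, ‖∑ k, bsign (δ k) • T k (x k)‖ ^ 2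
        ≤ M ^ 2 * ∑ δ : Fin n → Bool, ∑ ε : Fin Nm → Bool, ‖w δ ε‖ ^ 2 := by
      rw [Finset.mul_sum, Finset.mul_sum]
      exact Finset.sum_le_sum fun δ _ => bound1 δ
    have hd : (0 : ℝ) < (2 ^ n : ℝ) * (2 ^ Nm : ℝ) := by positivity
    have e1 : radAvg (fun k => T k (x k))
        = (∑ δ : Fin n → Bool, ‖∑ k, bsign (δ k) • T k (x k)‖ ^ 2) / (2 ^ n : ℝ) := rfl
    have e2 : davg Y
        = (∑ δ : Fin n → Bool, ∑ ε : Fin Nm → Bool, ‖w δ ε‖ ^ 2)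
            / ((2 ^ n : ℝ) * (2 ^ Nm : ℝ)) := rfl
    rw [e1, e2]
    calc (∑ δ : Fin n → Bool, ‖∑ k, bsign (δ k) • T k (x k)‖ ^ 2) / (2 ^ n : ℝ)
        = ((2 ^ Nm : ℝ) * ∑ δ : Fin n → Bool, ‖∑ k, bsign (δ k) • T k (x k)‖ ^ 2)
            / ((2 ^ n : ℝ) * (2 ^ Nm : ℝ)) := by
          rw [mul_comm ((2:ℝ) ^ n) ((2:ℝ) ^ Nm), ← div_div,
            mul_div_cancel_left₀ _ (ne_of_gt (by positivity : (0:ℝ) < (2:ℝ) ^ Nm))]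
      _ ≤ ((M ^ 2) * ∑ δ : Fin n → Bool, ∑ ε : Fin Nm → Bool, ‖w δ ε‖ ^ 2)
            / ((2 ^ n : ℝ) * (2 ^ Nm : ℝ)) := (div_le_div_iff_of_pos_right hd).mpr total
      _ = M ^ 2 * ((∑ δ : Fin n → Bool, ∑ ε : Fin Nm → Bool, ‖w δ ε‖ ^ 2)
            / ((2 ^ n : ℝ) * (2 ^ Nm : ℝ))) := mul_div_assoc _ _ _
  -- Step 2 : property (Δ) via the staircase embedding
  have h2 : davg Y ≤ CΔ ^ 2 * davg Z := by
    have e1 : davg Y = davg (fun i j => Y (σ i) j) := (davg_row_perm σ Y).symm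
    have e2 : davg (fun i j => Y (σ i) j)
        = davg (embed p q (fun i j => if (j : ℕ) < (N ∘ ⇑σ) i then Z i j else 0)) := by
      rw [davg_embed hp hq]
      rfl
    have e3 : (fun (J K : Fin (n + Nm)) =>
          if (K : ℕ) ≤ (J : ℕ) then embed p q Z J K else 0)
        = embed p q (fun i j => if (j : ℕ) < (N ∘ ⇑σ) i then Z i j else 0) :=
      trunc_embed p q (N ∘ ⇑σ) hkey Z
    have e4 : radAvg2 (fun (J K : Fin (n + Nm)) =>
          if (K : ℕ) ≤ (J : ℕ) then embed p q Z J K else 0)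
        ≤ CΔ ^ 2 * radAvg2 (embed p q Z) :=
      sq_le_of_sqrt_le (radAvg2_nonneg _) (radAvg2_nonneg _) (hΔ (n + Nm) (embed p q Z))
    calc davg Y = davg (embed p q (fun i j => if (j : ℕ) < (N ∘ ⇑σ) i then Z i j else 0)) :=
          e1.trans e2
      _ = radAvg2 (fun (J K : Fin (n + Nm)) =>
            if (K : ℕ) ≤ (J : ℕ) then embed p q Z J K else 0) := by
          rw [radAvg2_eq_davg, e3]
      _ ≤ CΔ ^ 2 * radAvg2 (embed p q Z) := e4
      _ = CΔ ^ 2 * davg Z := by rw [radAvg2_eq_davg, davg_embed hp hq]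
  -- Step 3 : pull out the U-operator
  have h3 : davg Z ≤ M ^ 2 * radAvg x := by
    have hper : ∀ (δ : Fin n → Bool) (ε : Fin Nm → Bool),
        ∑ i, ∑ j : Fin Nm, (bsign (δ i) * bsign (ε j)) • Z i j
          = (∑ j : Fin Nm, bsign (ε j) • U (j : ℕ)) (∑ i, bsign (δ i) • x (σ i)) := by
      intro δ ε
      rw [ContinuousLinearMap.sum_apply]
      rw [Finset.sum_comm]
      refine Finset.sum_congr rfl fun j _ => ?_
      rw [ContinuousLinearMap.smul_apply, map_sum, Finset.smul_sum]
      refine Finset.sum_congr rfl fun i _ => ?_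
      rw [ContinuousLinearMap.map_smul_of_tower, smul_smul]
      show (bsign (δ i) * bsign (ε j)) • Z i j = (bsign (ε j) * bsign (δ i)) • Z i j
      congr 1
      ring
    have hb : ∀ (δ : Fin n → Bool) (ε : Fin Nm → Bool),
        ‖∑ i, ∑ j : Fin Nm, (bsign (δ i) * bsign (ε j)) • Z i j‖ ^ 2
          ≤ M ^ 2 * ‖∑ i, bsign (δ i) • x (σ i)‖ ^ 2 := by
      intro δ ε
      rw [hper δ ε]
      have h1 : ‖(∑ j : Fin Nm, bsign (ε j) • U (j : ℕ)) (∑ i, bsign (δ i) • x (σ i))‖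
          ≤ M * ‖∑ i, bsign (δ i) • x (σ i)‖ :=
        le_trans (ContinuousLinearMap.le_opNorm _ _)
          (mul_le_mul_of_nonneg_right (hUop ε) (norm_nonneg _))
      calc ‖(∑ j : Fin Nm, bsign (ε j) • U (j : ℕ)) (∑ i, bsign (δ i) • x (σ i))‖ ^ 2
          ≤ (M * ‖∑ i, bsign (δ i) • x (σ i)‖) ^ 2 := pow_le_pow_left₀ (norm_nonneg _) h1 2
        _ = M ^ 2 * ‖∑ i, bsign (δ i) • x (σ i)‖ ^ 2 := by ring
    have total : ∑ δ : Fin n → Bool, ∑ ε : Fin Nm → Bool,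
          ‖∑ i, ∑ j : Fin Nm, (bsign (δ i) * bsign (ε j)) • Z i j‖ ^ 2
        ≤ (2 ^ Nm : ℝ) * (M ^ 2 * ∑ δ : Fin n → Bool, ‖∑ i, bsign (δ i) • x i‖ ^ 2) := by
      rw [← radAvg_sum_perm σ x]
      calc ∑ δ : Fin n → Bool, ∑ ε : Fin Nm → Bool,
            ‖∑ i, ∑ j : Fin Nm, (bsign (δ i) * bsign (ε j)) • Z i j‖ ^ 2
          ≤ ∑ δ : Fin n → Bool, ∑ _ε : Fin Nm → Bool,
              M ^ 2 * ‖∑ i, bsign (δ i) • x (σ i)‖ ^ 2 :=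
            Finset.sum_le_sum fun δ _ => Finset.sum_le_sum fun ε _ => hb δ ε
        _ = (2 ^ Nm : ℝ) * (M ^ 2 * ∑ δ : Fin n → Bool, ‖∑ i, bsign (δ i) • x (σ i)‖ ^ 2) := by
            rw [Finset.mul_sum, Finset.mul_sum]
            refine Finset.sum_congr rfl fun δ _ => ?_
            rw [Finset.sum_const, Finset.card_univ, card_bool_fun]
            push_cast
            ring
    have hd : (0 : ℝ) < (2 ^ n : ℝ) * (2 ^ Nm : ℝ) := by positivity
    have e1 : davg Z
        = (∑ δ : Fin n → Bool, ∑ ε : Fin Nm → Bool,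
            ‖∑ i, ∑ j : Fin Nm, (bsign (δ i) * bsign (ε j)) • Z i j‖ ^ 2)
          / ((2 ^ n : ℝ) * (2 ^ Nm : ℝ)) := rfl
    have e2 : radAvg x = (∑ δ : Fin n → Bool, ‖∑ i, bsign (δ i) • x i‖ ^ 2) / (2 ^ n : ℝ) := rfl
    rw [e1, e2]
    calc (∑ δ : Fin n → Bool, ∑ ε : Fin Nm → Bool,
            ‖∑ i, ∑ j : Fin Nm, (bsign (δ i) * bsign (ε j)) • Z i j‖ ^ 2)
          / ((2 ^ n : ℝ) * (2 ^ Nm : ℝ))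
        ≤ ((2 ^ Nm : ℝ) * (M ^ 2 * ∑ δ : Fin n → Bool, ‖∑ i, bsign (δ i) • x i‖ ^ 2))
            / ((2 ^ n : ℝ) * (2 ^ Nm : ℝ)) := (div_le_div_iff_of_pos_right hd).mpr total
      _ = M ^ 2 * ((∑ δ : Fin n → Bool, ‖∑ i, bsign (δ i) • x i‖ ^ 2) / (2 ^ n : ℝ)) := by
          rw [mul_comm ((2:ℝ) ^ n) ((2:ℝ) ^ Nm), ← div_div,
            mul_div_cancel_left₀ _ (ne_of_gt (by positivity : (0:ℝ) < (2:ℝ) ^ Nm)),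
            mul_div_assoc]
  -- Combine
  have hfinal : radAvg (fun k => T k (x k)) ≤ (|CΔ| * M ^ 2) ^ 2 * radAvg x := by
    calc radAvg (fun k => T k (x k)) ≤ M ^ 2 * davg Y := h1
      _ ≤ M ^ 2 * (CΔ ^ 2 * (M ^ 2 * radAvg x)) := by
          refine mul_le_mul_of_nonneg_left ?_ (sq_nonneg M)
          calc davg Y ≤ CΔ ^ 2 * davg Z := h2
            _ ≤ CΔ ^ 2 * (M ^ 2 * radAvg x) := mul_le_mul_of_nonneg_left h3 (sq_nonneg CΔ)
      _ = (|CΔ| * M ^ 2) ^ 2 * radAvg x := by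
          rw [mul_pow, _root_.sq_abs]
          ring
  calc Real.sqrt (radAvg fun k => T k (x k))
      ≤ Real.sqrt ((|CΔ| * M ^ 2) ^ 2 * radAvg x) := Real.sqrt_le_sqrt hfinal
    _ = |CΔ| * M ^ 2 * Real.sqrt (radAvg x) := by
        rw [Real.sqrt_mul (by positivity), Real.sqrt_sq (by positivity)]

end
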